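/- Let F̃ ∈ ℝ^{n×n}, G ∈ ℝ^{q×n}, H ∈ ℝ^{n×q}, and let P ∈ ℝ^{n×n} be symmetric. Suppose the block matrix [[P − F̃^T P F̃ − G^T H^T F̃ − F̃^T H G, G^T H^T], [H G, P]] is positive definite. Then P is positive definite (hence invertible), and setting J̃ = P^{−1} H and Ã = F̃ + J̃ G, the matrix Ã^T P Ã − P is negative definite. -/

import Mathlib

open Matrix

/-- Symmetric positive definiteness of a real matrix. -/
def PosDefM {ι : Type*} [Fintype ι] (P : Matrix ι ι ℝ) : Prop :=
  Pᵀ = P ∧ ∀ v : ι → ℝ, v ≠ 0 → 0 < v ⬝ᵥ (P *ᵥ v)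

/-- Negative definiteness of a real matrix. -/
def NegDefM {ι : Type*} [Fintype ι] (Q : Matrix ι ι ℝ) : Prop :=
  ∀ v : ι → ℝ, v ≠ 0 → v ⬝ᵥ (Q *ᵥ v) < 0

/-- **Second LMI-based design (Proposition 12 of the paper).** If the block LMI
`[[P - F̃ᵀPF̃ - GᵀHᵀF̃ - F̃ᵀHG, GᵀHᵀ], [HG, P]] ≻ 0` holds for a symmetric `P`, then
`P ≻ 0` and, setting `J̃ = P⁻¹ H` and `Ã = F̃ + J̃ G`, one has `Ãᵀ P Ã - P ≺ 0`. -/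
theorem lmi_design_output_feedback
    (n q : ℕ)
    (F : Matrix (Fin n) (Fin n) ℝ) (G : Matrix (Fin q) (Fin n) ℝ)
    (H : Matrix (Fin n) (Fin q) ℝ)
    (P : Matrix (Fin n) (Fin n) ℝ) (hPsym : Pᵀ = P)
    (hLMI : PosDefM (Matrix.fromBlocks
      (P - Fᵀ * P * F - Gᵀ * Hᵀ * F - Fᵀ * H * G) (Gᵀ * Hᵀ) (H * G) P)) :
    PosDefM P ∧
      NegDefM ((F + P⁻¹ * H * G)ᵀ * P * (F + P⁻¹ * H * G) - P) := by
  -- P is positive definite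
  have hP : PosDefM P := by
    refine ⟨hPsym, fun w hw => ?_⟩
    have hne : (Sum.elim (0 : Fin n → ℝ) w) ≠ 0 := by
      intro h
      apply hw
      funext i
      exact congrFun h (Sum.inr i)
    have := hLMI.2 (Sum.elim 0 w) hne
    rw [Matrix.fromBlocks_mulVec, sumElim_dotProduct_sumElim] at this
    simpa using this
  refine ⟨hP, ?_⟩
  -- P is invertible
  have hPD : P.PosDef := by
    refine Matrix.posDef_iff_dotProduct_mulVec.mpr ⟨by simpa [Matrix.IsHermitian] using hPsym, fun x hx => ?_⟩
    simpa using hP.2 x hx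
  have hdet : IsUnit P.det := isUnit_iff_ne_zero.mpr (ne_of_gt hPD.det_pos)
  have hPinvP : P⁻¹ * P = 1 := Matrix.nonsing_inv_mul P hdet
  have hPPinv : P * P⁻¹ = 1 := Matrix.mul_nonsing_inv P hdet
  have hPinvT : (P⁻¹)ᵀ = P⁻¹ := by
    rw [Matrix.transpose_nonsing_inv, hPsym]
  have hc1 : ∀ {m : Type} [Fintype m] (X : Matrix (Fin n) m ℝ), P * (P⁻¹ * X) = X := by
    intro m _ X; rw [← Matrix.mul_assoc, hPPinv, Matrix.one_mul]
  have hc2 : ∀ {m : Type} [Fintype m] (X : Matrix (Fin n) m ℝ), P⁻¹ * (P * X) = X := by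
    intro m _ X; rw [← Matrix.mul_assoc, hPinvP, Matrix.one_mul]
  -- key matrix identity
  have hkey : (F + P⁻¹ * H * G)ᵀ * P * (F + P⁻¹ * H * G) - P =
      -(P - Fᵀ * P * F - Gᵀ * Hᵀ * F - Fᵀ * H * G - Gᵀ * Hᵀ * P⁻¹ * (H * G)) := by
    simp only [Matrix.transpose_add, Matrix.transpose_mul, hPinvT, Matrix.add_mul,
      Matrix.mul_add, Matrix.mul_assoc, hc1, hc2]
    abel
  rw [hkey]
  intro v hv
  have hne : Sum.elim v (-(P⁻¹ *ᵥ (H *ᵥ (G *ᵥ v)))) ≠ 0 := fun h =>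
    hv (funext fun i => congrFun h (Sum.inl i))
  have hc3 : P * (P⁻¹ * (H * G)) = H * G := hc1 _
  have hq := hLMI.2 _ hne
  rw [Matrix.fromBlocks_mulVec, sumElim_dotProduct_sumElim] at hq
  simp only [Matrix.mulVec_neg, Matrix.mulVec_mulVec, Matrix.sub_mulVec,
    dotProduct_add, dotProduct_sub, dotProduct_neg,
    Matrix.neg_mulVec, Matrix.mul_assoc, Sum.elim_comp_inl, Sum.elim_comp_inr, hPPinv, Matrix.mul_one,
    Matrix.one_mulVec] at hq ⊢
  rw [hc3] at hq
  linarith
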